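/- A polynomial of the form f(x) = ∑_{i=0}^{⌊n/2⌋} γ_i x^i (1+x)^{n-2i} with all γ_i ≥ 0 and not all zero is real-rooted if and only if its γ-polynomial γ(x) = ∑_{i=0}^{⌊n/2⌋} γ_i x^i is real-rooted. -/

import Mathlib

open Polynomial

open Polynomial in
/-- A real polynomial is real-rooted if it is zero or all of its roots (counted
with multiplicity) are real, i.e. its number of real roots equals its degree. -/
def RealRooted (f : Polynomial ℝ) : Prop :=
  f = 0 ∨ Multiset.card f.roots = f.natDegree

open Polynomial in
/-- The real roots of `f`, listed in weakly decreasing order. -/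
noncomputable def rootsDesc (f : Polynomial ℝ) : List ℝ :=
  (f.roots.sort (· ≤ ·)).reverse

open Polynomial in
/-- `f` interlaces `g`: both are real-rooted, with roots `α_1 ≥ α_2 ≥ ⋯` of `f`
and `β_1 ≥ β_2 ≥ ⋯` of `g` satisfying `⋯ ≤ α_2 ≤ β_2 ≤ α_1 ≤ β_1`.  By
convention the zero polynomial interlaces and is interlaced by everything. -/
def Interlaces (f g : Polynomial ℝ) : Prop :=
  f = 0 ∨ g = 0 ∨
    (RealRooted f ∧ RealRooted g ∧
      (rootsDesc f).length ≤ (rootsDesc g).length ∧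
      (rootsDesc g).length ≤ (rootsDesc f).length + 1 ∧
      (∀ i, i < (rootsDesc f).length → (rootsDesc f).getD i 0 ≤ (rootsDesc g).getD i 0) ∧
      (∀ i, i + 1 < (rootsDesc g).length →
        (rootsDesc g).getD (i + 1) 0 ≤ (rootsDesc f).getD i 0))


namespace GammaGP

open Polynomial

variable {K : Type*} [Field K]

/-- The transform `T p = ∑_j p_j X^j (1+X)^{2(deg p - j)}`. -/
noncomputable def T (p : K[X]) : K[X] :=
  ∑ j ∈ Finset.range (p.natDegree + 1),
    C (p.coeff j) * X ^ j * (1 + X) ^ (2 * (p.natDegree - j))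

lemma eval_T (p : K[X]) {x : K} (hx : (1 : K) + x ≠ 0) :
    (T p).eval x = (1 + x) ^ (2 * p.natDegree) * p.eval (x / (1 + x) ^ 2) := by
  rw [T, eval_finset_sum, eval_eq_sum_range, Finset.mul_sum]
  refine Finset.sum_congr rfl fun j hj => ?_
  have hj' : j ≤ p.natDegree := by
    simpa [Nat.lt_succ_iff] using Finset.mem_range.1 hj
  have hpow : (1 + x) ^ (2 * p.natDegree)
      = (1 + x) ^ (2 * (p.natDegree - j)) * ((1 + x) ^ 2) ^ j := by
    rw [← pow_mul, ← pow_add]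
    congr 1
    omega
  rw [hpow, div_pow]
  simp only [eval_mul, eval_pow, eval_add, eval_one, eval_X, eval_C]
  field_simp

lemma T_mul [Infinite K] {p q : K[X]} (hp : p ≠ 0) (hq : q ≠ 0) :
    T (p * q) = T p * T q := by
  have hinf : Set.Infinite {x : K | (1 : K) + x ≠ 0} := by
    apply ((Set.finite_singleton (-1 : K)).infinite_compl).mono
    intro x hx h0
    exact hx (by simpa using eq_neg_of_add_eq_zero_right h0)
  have hzero : T (p * q) - T p * T q = 0 := by
    apply Polynomial.eq_zero_of_infinite_isRoot
    apply hinf.mono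
    intro x hx
    have hx : (1 : K) + x ≠ 0 := hx
    simp only [Set.mem_setOf_eq, IsRoot, eval_sub, eval_mul]
    rw [eval_T p hx, eval_T q hx, eval_T (p * q) hx, natDegree_mul hp hq,
      eval_mul, mul_add, pow_add]
    ring
  exact sub_eq_zero.1 hzero

lemma T_C (c : K) : T (C c) = C c := by
  simp [T]

lemma T_X_sub_C (r : K) : T (X - C r) = C (-r) * (1 + X) ^ 2 + X := by
  rw [T, natDegree_X_sub_C]
  rw [Finset.sum_range_succ, Finset.sum_range_one]
  simp [coeff_sub, coeff_X_zero, coeff_C, coeff_X_one]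

lemma T_multiset {c : K} (hc : c ≠ 0) [Infinite K] (s : Multiset K) :
    T (C c * (s.map fun a => X - C a).prod)
      = C c * (s.map fun a => T (X - C a)).prod := by
  induction s using Multiset.induction with
  | empty => simp [T_C]
  | cons a s ih =>
    have h1 : (X - C a : K[X]) ≠ 0 := X_sub_C_ne_zero a
    have h2 : C c * (s.map fun a => X - C a).prod ≠ 0 := by
      apply mul_ne_zero (by simpa using hc)
      apply Multiset.prod_ne_zero
      intro h0
      obtain ⟨b, _, hb⟩ := Multiset.mem_map.1 h0
      exact X_sub_C_ne_zero b hb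
    rw [Multiset.map_cons, Multiset.prod_cons, Multiset.map_cons, Multiset.prod_cons,
      mul_left_comm, T_mul h1 h2, ih, mul_left_comm]

lemma eval_pos_of_nonneg {p : ℝ[X]} (hp : p ≠ 0) (h : ∀ i, 0 ≤ p.coeff i)
    {x : ℝ} (hx : 0 < x) : 0 < p.eval x := by
  rw [eval_eq_sum_range]
  apply Finset.sum_pos' (fun i _ => mul_nonneg (h i) (pow_nonneg hx.le i))
  refine ⟨p.natDegree, Finset.self_mem_range_succ _, ?_⟩
  have hlc : p.coeff p.natDegree ≠ 0 := by
    simpa [coeff_natDegree] using leadingCoeff_ne_zero.2 hp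
  exact mul_pos ((h _).lt_of_ne (Ne.symm hlc)) (pow_pos hx _)

lemma splits_T_X_sub_C' {r : ℝ} (hr : r < 0) :
    ∃ a b : ℝ, (C (-r) * (1 + X) ^ 2 + X : ℝ[X]) = C (-r) * (X - C a) * (X - C b) := by
  set u : ℝ := (1 - 2 * r) / r with hu
  have hru : r * u = 1 - 2 * r := by
    rw [hu, mul_comm r ((1 - 2 * r) / r), div_mul_cancel₀ _ hr.ne]
  have hu4 : 0 ≤ u ^ 2 - 4 := by
    have hu2 : u < -2 := by
      rw [hu, div_lt_iff_of_neg hr]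
      nlinarith
    nlinarith
  set D : ℝ := Real.sqrt (u ^ 2 - 4) with hD
  have hD2 : D ^ 2 = u ^ 2 - 4 := Real.sq_sqrt hu4
  refine ⟨(u + D) / 2, (u - D) / 2, ?_⟩
  apply Polynomial.funext
  intro x
  simp only [eval_add, eval_mul, eval_pow, eval_sub, eval_one, eval_X, eval_C]
  linear_combination (-x) * hru - (r / 4) * hD2

lemma T_map {L : Type*} [Field L] (f : K →+* L) (p : K[X]) :
    (T p).map f = T (p.map f) := by
  rw [T, T, natDegree_map, Polynomial.map_sum]
  refine Finset.sum_congr rfl fun j hj => ?_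
  simp [Polynomial.map_mul, Polynomial.map_pow, Polynomial.map_add]

lemma splits_of_roots_real : ∀ (N : ℕ) (p : ℝ[X]), p.natDegree ≤ N →
    (∀ z ∈ (p.map (algebraMap ℝ ℂ)).roots, ∃ r : ℝ, (r : ℂ) = z) →
    p.Splits := by
  intro N
  induction N with
  | zero => exact fun p hp _ => Splits.of_natDegree_le_one (by omega)
  | succ N ih =>
    intro p hp h
    by_cases h1 : p.natDegree ≤ 1
    · exact Splits.of_natDegree_le_one h1
    push_neg at h1
    have hp0 : p ≠ 0 := fun h0 => by simp [h0] at h1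
    have hmap0 : p.map (algebraMap ℝ ℂ) ≠ 0 :=
      (Polynomial.map_ne_zero_iff (algebraMap ℝ ℂ).injective).2 hp0
    have hdeg : 0 < (p.map (algebraMap ℝ ℂ)).degree := by
      rw [degree_map]
      exact natDegree_pos_iff_degree_pos.1 (by omega)
    obtain ⟨z, hz⟩ := Complex.exists_root hdeg
    obtain ⟨r, hr⟩ := h z ((mem_roots hmap0).2 hz)
    have hroot : p.IsRoot r := by
      have he : algebraMap ℝ ℂ (p.eval r) = 0 := by
        rw [← eval₂_at_apply, ← eval_map]
        show eval ((algebraMap ℝ ℂ) r) (map (algebraMap ℝ ℂ) p) = 0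
        rw [show ((algebraMap ℝ ℂ) r) = z from hr]
        exact hz
      have h2 : Complex.ofReal (p.eval r) = 0 := he
      exact_mod_cast h2
    obtain ⟨q, hq⟩ := dvd_iff_isRoot.2 hroot
    have hq0 : q ≠ 0 := by
      intro h0
      rw [h0, mul_zero] at hq
      exact hp0 hq
    have hqdeg : q.natDegree ≤ N := by
      have := natDegree_mul (X_sub_C_ne_zero r) hq0
      rw [← hq, natDegree_X_sub_C] at this
      omega
    have hqroots : ∀ z ∈ (q.map (algebraMap ℝ ℂ)).roots, ∃ r : ℝ, (r : ℂ) = z := by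
      intro w hw
      apply h
      have hq0' : q.map (algebraMap ℝ ℂ) ≠ 0 :=
        (Polynomial.map_ne_zero_iff (algebraMap ℝ ℂ).injective).2 hq0
      have hwroot := (mem_roots hq0').1 hw
      rw [mem_roots hmap0, hq, Polynomial.map_mul]
      show eval w (map (algebraMap ℝ ℂ) (X - C r) * map (algebraMap ℝ ℂ) q) = 0
      rw [eval_mul, hwroot, mul_zero]
    rw [hq]
    exact Splits.mul (Splits.X_sub_C _) (ih q hqdeg hqroots)

lemma T_ne_zero {p : ℝ[X]} (hp : p ≠ 0) (h : ∀ i, 0 ≤ p.coeff i) : T p ≠ 0 := by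
  intro h0
  have := eval_T p (x := 1) (by norm_num)
  rw [h0, eval_zero] at this
  have hpos : 0 < p.eval (1 / (1 + 1 : ℝ) ^ 2) :=
    eval_pos_of_nonneg hp h (by norm_num)
  have := mul_pos (pow_pos (by norm_num : (0:ℝ) < 1 + 1) (2 * p.natDegree)) hpos
  linarith

lemma splits_T_X_sub_C {r : ℝ} (hr : r ≤ 0) :
    (T (X - C r)).Splits := by
  rcases hr.lt_or_eq with hr | hr
  · obtain ⟨a, b, hab⟩ := splits_T_X_sub_C' hr
    rw [T_X_sub_C, hab]
    exact Splits.mul (Splits.mul (Splits.C _) (Splits.X_sub_C _)) (Splits.X_sub_C _)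
  · rw [T_X_sub_C, hr]
    simpa using Splits.X

lemma core {p : ℝ[X]} (hp : p ≠ 0) (h : ∀ i, 0 ≤ p.coeff i) :
    (T p).Splits ↔ p.Splits := by
  constructor
  · intro hT
    apply splits_of_roots_real p.natDegree p le_rfl
    intro z hz
    set f := algebraMap ℝ ℂ with hf
    have hpc : p.map f ≠ 0 := (Polynomial.map_ne_zero_iff f.injective).2 hp
    obtain ⟨q, hq⟩ := dvd_iff_isRoot.2 ((mem_roots hpc).1 hz)
    have hq0 : q ≠ 0 := by
      intro h0; rw [h0, mul_zero] at hq; exact hpc hq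
    by_cases hz0 : z = 0
    · exact ⟨0, by simp [hz0]⟩
    have hTfac : T (p.map f) = T (X - C z) * T q := by
      rw [hq, T_mul (X_sub_C_ne_zero z) hq0]
    have hTl : T (X - C z) = C (-z) * X ^ 2 + C (1 - 2 * z) * X + C (-z) := by
      rw [T_X_sub_C]
      simp only [map_neg, map_sub, map_mul, map_one, map_ofNat]
      ring
    have hdeg : 0 < (T (X - C z)).degree := by
      rw [hTl, degree_quadratic (neg_ne_zero.2 hz0)]
      norm_num
    obtain ⟨x, hx⟩ := Complex.exists_root hdeg
    have hTp0 : T p ≠ 0 := T_ne_zero hp h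
    have hxroot : x ∈ ((T p).map f).roots := by
      rw [mem_roots ((Polynomial.map_ne_zero_iff f.injective).2 hTp0)]
      rw [T_map, hTfac]
      show eval x (T (X - C z) * T q) = 0
      rw [eval_mul, hx, zero_mul]
    rw [hT.roots_map f] at hxroot
    obtain ⟨y, _, hyx⟩ := Multiset.mem_map.1 hxroot
    have hyx' : (y : ℂ) = x := hyx
    have heq : -z * (1 + x) ^ 2 + x = 0 := by
      have := hx
      rw [T_X_sub_C] at this
      simpa [IsRoot, eval_add, eval_mul, eval_pow] using this
    have hx1 : (1 : ℂ) + x ≠ 0 := by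
      intro h0
      rw [h0] at heq
      have hxm : x = -1 := by linear_combination h0
      rw [hxm] at heq
      norm_num at heq
    have hzx : z = x / (1 + x) ^ 2 := by
      rw [eq_div_iff (pow_ne_zero 2 hx1)]
      linear_combination -heq
    refine ⟨y / (1 + y) ^ 2, ?_⟩
    have h1y : ((1 + y : ℝ) : ℂ) ≠ 0 := by
      rw [show ((1 + y : ℝ) : ℂ) = 1 + x by push_cast [hyx']; ring]
      exact hx1
    have h1y' : (1 + y : ℝ) ≠ 0 := fun h0 => h1y (by rw [h0]; norm_num)
    rw [hzx, ← hyx']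
    push_cast
    ring
  · intro hs
    have hlc : p.leadingCoeff ≠ 0 := leadingCoeff_ne_zero.2 hp
    have factor := hs.eq_prod_roots
    have hroots : ∀ a ∈ p.roots, a ≤ 0 := by
      intro a ha
      by_contra hpos
      push_neg at hpos
      have := (mem_roots hp).1 ha
      exact (eval_pos_of_nonneg hp h hpos).ne' this
    have key : T p = C p.leadingCoeff * (p.roots.map fun a => T (X - C a)).prod := by
      conv_lhs => rw [factor]
      exact T_multiset hlc _
    rw [key]
    apply Splits.mul (Splits.C _)
    have : ∀ (s : Multiset ℝ), (∀ a ∈ s, a ≤ 0) →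
        ((s.map fun a => T (X - C a)).prod).Splits := by
      intro s
      induction s using Multiset.induction with
      | empty => simpa using Splits.one
      | cons a s ih =>
        intro hmem
        rw [Multiset.map_cons, Multiset.prod_cons]
        exact Splits.mul (splits_T_X_sub_C (hmem a (Multiset.mem_cons_self a s)))
          (ih fun b hb => hmem b (Multiset.mem_cons_of_mem hb))
    exact this _ hroots

end GammaGP

open GammaGP in
/-- A `γ`-positive polynomial `f(x) = ∑_{i=0}^{⌊n/2⌋} γ_i x^i (1+x)^{n-2i}` with
all `γ_i ≥ 0`, not all zero, is real-rooted if and only if its `γ`-polynomial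
`γ(x) = ∑_{i=0}^{⌊n/2⌋} γ_i x^i` is real-rooted. -/
theorem gamma_positive_real_rooted_iff (n : ℕ) (γ : ℕ → ℝ)
    (hnonneg : ∀ i, 0 ≤ γ i) (hne : ∃ i ≤ n / 2, γ i ≠ 0) :
    RealRooted (∑ i ∈ Finset.range (n / 2 + 1),
        C (γ i) * X ^ i * (1 + X) ^ (n - 2 * i)) ↔
      RealRooted (∑ i ∈ Finset.range (n / 2 + 1), C (γ i) * X ^ i) := by
  set Γ : ℝ[X] := ∑ i ∈ Finset.range (n / 2 + 1), C (γ i) * X ^ i with hΓdef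
  set G : ℝ[X] := ∑ i ∈ Finset.range (n / 2 + 1),
    C (γ i) * X ^ i * (1 + X) ^ (n - 2 * i) with hGdef
  have hco : ∀ k, Γ.coeff k = if k ∈ Finset.range (n / 2 + 1) then γ k else 0 := by
    intro k
    rw [hΓdef, finset_sum_coeff]
    simp only [coeff_C_mul, coeff_X_pow]
    rw [Finset.sum_congr rfl (fun i _ => by
      rw [mul_ite, mul_one, mul_zero])]
    exact Finset.sum_ite_eq (Finset.range (n / 2 + 1)) k γ
  have hΓnonneg : ∀ i, 0 ≤ Γ.coeff i := by
    intro i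
    rw [hco]
    split
    · exact hnonneg i
    · exact le_rfl
  have hΓne : Γ ≠ 0 := by
    obtain ⟨i, hi, hγi⟩ := hne
    intro h0
    apply hγi
    have := hco i
    rw [h0] at this
    simpa [Finset.mem_range, Nat.lt_succ_iff, hi] using this.symm
  have hd : Γ.natDegree ≤ n / 2 := by
    rw [hΓdef]
    apply natDegree_sum_le_of_forall_le
    intro i hi
    refine le_trans (natDegree_C_mul_le _ _) ?_
    rw [natDegree_X_pow]
    exact Nat.lt_succ_iff.1 (Finset.mem_range.1 hi)
  have h2d : 2 * Γ.natDegree ≤ n := by omega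
  have key : G = (1 + X) ^ (n - 2 * Γ.natDegree) * T Γ := by
    rw [T, Finset.mul_sum]
    have e1 : ∀ j ∈ Finset.range (Γ.natDegree + 1),
        (1 + X : ℝ[X]) ^ (n - 2 * Γ.natDegree) *
          (C (Γ.coeff j) * X ^ j * (1 + X) ^ (2 * (Γ.natDegree - j)))
        = C (Γ.coeff j) * X ^ j * (1 + X) ^ (n - 2 * j) := by
      intro j hj
      have hj' : j ≤ Γ.natDegree := Nat.lt_succ_iff.1 (Finset.mem_range.1 hj)
      have hexp : (n - 2 * Γ.natDegree) + 2 * (Γ.natDegree - j) = n - 2 * j := by omega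
      rw [← hexp, pow_add]
      ring
    rw [Finset.sum_congr rfl e1]
    rw [Finset.sum_subset (Finset.range_subset_range.2 (by omega : Γ.natDegree + 1 ≤ n / 2 + 1))]
    · rw [hGdef]
      refine Finset.sum_congr rfl fun i hi => ?_
      rw [hco i, if_pos hi]
    · intro j hj hj'
      have : Γ.natDegree < j := by
        simp only [Finset.mem_range] at hj hj'
        omega
      rw [coeff_eq_zero_of_natDegree_lt this, map_zero, zero_mul, zero_mul]
  have hTne : T Γ ≠ 0 := T_ne_zero hΓne hΓnonneg
  have h1X : (1 + X : ℝ[X]) ≠ 0 := by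
    intro h0
    have := congrArg (eval 0) h0
    simp at this
  have hGne : G ≠ 0 := by
    rw [key]
    exact mul_ne_zero (pow_ne_zero _ h1X) hTne
  have hsplit1 : (1 + X : ℝ[X]).Splits := by
    apply Splits.of_natDegree_le_one
    refine le_trans (natDegree_add_le _ _) ?_
    simp
  have hGiff : RealRooted G ↔ (T Γ).Splits := by
    unfold RealRooted
    rw [or_iff_right hGne, ← splits_iff_card_roots, key]
    constructor
    · intro hsp
      exact ((splits_mul (pow_ne_zero _ h1X) hTne).1 hsp).2
    · intro hsp
      exact Splits.mul (hsplit1.pow _) hsp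
  have hΓiff : RealRooted Γ ↔ Γ.Splits := by
    unfold RealRooted
    rw [or_iff_right hΓne, ← splits_iff_card_roots]
  rw [hGiff, hΓiff]
  exact core hΓne hΓnonneg
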